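/- Let (gₙ) be a sequence of functions from a set Y to a normed space F, (cₙ) a sequence of positive reals, and (y₁ⁿ), (y₂ⁿ) sequences in Y. Suppose supₙ ‖gₙ(y₁ⁿ) - gₙ(y₂ⁿ)‖/cₙ = ∞, for each m supₙ ‖gₘ(y₁ⁿ) - gₘ(y₂ⁿ)‖/cₙ = Lₘ < ∞, and sup over all m,n of ‖gₘ(y₁ⁿ) - gₘ(y₂ⁿ)‖ = C < ∞. Then there exists a nonnegative summable sequence (εₙ) such that whenever the pointwise sum g = Σ εₙ gₙ converges on {y₁ⁿ, y₂ⁿ : n ∈ ℕ}, one has supₙ ‖g(y₁ⁿ) - g(y₂ⁿ)‖/cₙ = ∞. -/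

import Mathlib

noncomputable def auxS (pick : ℕ → ℝ → ℕ) (c L : ℕ → ℝ) (Cc : ℝ) : ℕ → ℕ × ℝ × ℝ
  | 0 => (0, 1, 0)
  | k + 1 =>
    let st := auxS pick c L Cc k
    let tk := (1 / 2 : ℝ) ^ k * st.2.1 / (Cc + 1)
    let n1 := pick st.1 (((k : ℝ) + 1 + st.2.2) / tk)
    (n1, min st.2.1 (c n1), st.2.2 + tk * L n1)

noncomputable def auxn (pick : ℕ → ℝ → ℕ) (c L : ℕ → ℝ) (Cc : ℝ) (k : ℕ) : ℕ :=
  (auxS pick c L Cc (k + 1)).1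

noncomputable def auxb (pick : ℕ → ℝ → ℕ) (c L : ℕ → ℝ) (Cc : ℝ) (k : ℕ) : ℝ :=
  (auxS pick c L Cc k).2.1

noncomputable def auxSS (pick : ℕ → ℝ → ℕ) (c L : ℕ → ℝ) (Cc : ℝ) (k : ℕ) : ℝ :=
  (auxS pick c L Cc k).2.2

noncomputable def auxt (pick : ℕ → ℝ → ℕ) (c L : ℕ → ℝ) (Cc : ℝ) (k : ℕ) : ℝ :=
  (1 / 2 : ℝ) ^ k * auxb pick c L Cc k / (Cc + 1)

section auxlemmas

variable (pick : ℕ → ℝ → ℕ) (c L : ℕ → ℝ) (Cc : ℝ)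

lemma auxn_eq (k : ℕ) :
    auxn pick c L Cc k =
      pick (auxS pick c L Cc k).1 (((k : ℝ) + 1 + auxSS pick c L Cc k) / auxt pick c L Cc k) :=
  rfl

lemma auxb_zero : auxb pick c L Cc 0 = 1 := rfl

lemma auxSS_zero : auxSS pick c L Cc 0 = 0 := rfl

lemma auxb_succ (k : ℕ) :
    auxb pick c L Cc (k + 1) = min (auxb pick c L Cc k) (c (auxn pick c L Cc k)) := rfl

lemma auxSS_succ (k : ℕ) :
    auxSS pick c L Cc (k + 1) =
      auxSS pick c L Cc k + auxt pick c L Cc k * L (auxn pick c L Cc k) := rfl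

end auxlemmas

theorem stmt10 {Y F : Type*} [NormedAddCommGroup F] [NormedSpace ℝ F]
    (g : ℕ → Y → F) (c : ℕ → ℝ) (hc : ∀ n, 0 < c n)
    (y₁ y₂ : ℕ → Y)
    (hsup : ∀ M : ℝ, ∃ n, M < ‖g n (y₁ n) - g n (y₂ n)‖ / c n)
    (hL : ∀ m : ℕ, ∃ L : ℝ, ∀ n, ‖g m (y₁ n) - g m (y₂ n)‖ / c n ≤ L)
    (hC : ∃ C : ℝ, ∀ m n, ‖g m (y₁ n) - g m (y₂ n)‖ ≤ C) :
    ∃ ε : ℕ → ℝ, (∀ n, 0 ≤ ε n) ∧ Summable ε ∧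
      ∀ G : Y → F,
        (∀ y : Y, (∃ n, y = y₁ n ∨ y = y₂ n) → HasSum (fun n => ε n • g n y) (G y)) →
        ∀ M : ℝ, ∃ n, M < ‖G (y₁ n) - G (y₂ n)‖ / c n := by
  classical
  obtain ⟨Cc, hCc⟩ := hC
  have hCc0 : 0 ≤ Cc := le_trans (norm_nonneg _) (hCc 0 0)
  have hCc1 : (1 : ℝ) ≤ Cc + 1 := by linarith
  choose L hLa using hL
  -- step existence
  have hstep : ∀ (N : ℕ) (M : ℝ), ∃ n, N < n ∧ M < ‖g n (y₁ n) - g n (y₂ n)‖ / c n := by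
    intro N M
    obtain ⟨n, hn⟩ := hsup (max M ((Finset.range (N + 1)).sup'
      (Finset.nonempty_range_iff.mpr (Nat.succ_ne_zero N))
      (fun i => ‖g i (y₁ i) - g i (y₂ i)‖ / c i)))
    refine ⟨n, ?_, lt_of_le_of_lt (le_max_left _ _) hn⟩
    by_contra h
    push_neg at h
    have hn' : ‖g n (y₁ n) - g n (y₂ n)‖ / c n ≤
        max M ((Finset.range (N + 1)).sup'
          (Finset.nonempty_range_iff.mpr (Nat.succ_ne_zero N))
          (fun i => ‖g i (y₁ i) - g i (y₂ i)‖ / c i)) :=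
      le_max_of_le_right (Finset.le_sup'
        (f := fun i => ‖g i (y₁ i) - g i (y₂ i)‖ / c i)
        (Finset.mem_range.mpr (Nat.lt_succ_of_le h)))
    exact absurd hn (not_lt.2 hn')
  choose pick hpick1 hpick2 using hstep
  -- abbreviations
  set nn : ℕ → ℕ := auxn pick c L Cc with hnn
  set bb : ℕ → ℝ := auxb pick c L Cc with hbb
  set SS : ℕ → ℝ := auxSS pick c L Cc with hSSdef
  set t : ℕ → ℝ := auxt pick c L Cc with htdef
  -- basic invariants
  have hb : ∀ k, 0 < bb k ∧ bb k ≤ 1 := by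
    intro k
    induction k with
    | zero => rw [hbb, auxb_zero]; norm_num
    | succ k ih =>
      rw [hbb, auxb_succ]
      exact ⟨lt_min ih.1 (hc _), le_trans (min_le_left _ _) ih.2⟩
  have htpos : ∀ k, 0 < t k := by
    intro k
    rw [htdef, auxt]
    have := (hb k).1
    rw [hbb] at this
    positivity
  have htle : ∀ k, t k ≤ (1 / 2 : ℝ) ^ k := by
    intro k
    rw [htdef, auxt]
    rw [div_le_iff₀ (by linarith : (0:ℝ) < Cc + 1)]
    calc (1 / 2 : ℝ) ^ k * auxb pick c L Cc k ≤ (1 / 2 : ℝ) ^ k * 1 := by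
          have h2 := (hb k).2
          rw [hbb] at h2
          exact mul_le_mul_of_nonneg_left h2 (by positivity)
      _ ≤ (1 / 2 : ℝ) ^ k * (Cc + 1) := by
          exact mul_le_mul_of_nonneg_left hCc1 (by positivity)
  have hbdec : ∀ j k, j ≤ k → bb k ≤ bb j :=
    fun j k h => antitone_nat_of_succ_le
      (fun k => by rw [hbb, auxb_succ]; exact min_le_left _ _) h
  have hb_le_c : ∀ k j, k + 1 ≤ j → bb j ≤ c (nn k) := by
    intro k j hj
    refine le_trans (hbdec _ _ hj) ?_
    rw [hbb, auxb_succ]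
    exact min_le_right _ _
  have ht_le : ∀ k j, k + 1 ≤ j → t j * (Cc + 1) ≤ (1 / 2 : ℝ) ^ j * c (nn k) := by
    intro k j hj
    have heq : t j * (Cc + 1) = (1 / 2 : ℝ) ^ j * bb j := by
      rw [htdef, auxt, hbb]
      field_simp
    rw [heq]
    exact mul_le_mul_of_nonneg_left (hb_le_c k j hj) (by positivity)
  have hnmono : StrictMono nn := by
    apply strictMono_nat_of_lt_succ
    intro k
    have heq : nn (k + 1) = pick (auxS pick c L Cc (k + 1)).1
        (((k : ℝ) + 1 + 1 + SS (k + 1)) / t (k + 1)) := by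
      rw [hnn, auxn_eq, hSSdef, htdef]
      norm_num
    rw [heq]
    exact hpick1 _ _
  have hkey : ∀ k : ℕ, ((k : ℝ) + 1 + SS k) / t k <
      ‖g (nn k) (y₁ (nn k)) - g (nn k) (y₂ (nn k))‖ / c (nn k) := by
    intro k
    have heq : nn k = pick (auxS pick c L Cc k).1 (((k : ℝ) + 1 + SS k) / t k) := by
      rw [hnn, auxn_eq, hSSdef, htdef]
    rw [heq]
    exact hpick2 _ _
  have hSSf : ∀ k, SS k = ∑ j ∈ Finset.range k, t j * L (nn j) := by
    intro k
    induction k with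
    | zero => rw [hSSdef, auxSS_zero]; simp
    | succ k ih =>
      rw [hSSdef, auxSS_succ, Finset.sum_range_succ, ← hSSdef, ← htdef, ← hnn, ih]
  -- the sequence ε
  have hninj : Function.Injective nn := hnmono.injective
  set ε : ℕ → ℝ := Function.extend nn t (fun _ => 0) with hε
  have hε_comp : ∀ k, ε (nn k) = t k := fun k => hninj.extend_apply t _ k
  have hε_zero : ∀ x ∉ Set.range nn, ε x = 0 := by
    intro x hx
    exact Function.extend_apply' t _ x (by simpa [Set.range] using hx)
  have hεnonneg : ∀ m, 0 ≤ ε m := by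
    intro m
    by_cases h : m ∈ Set.range nn
    · obtain ⟨k, rfl⟩ := h
      rw [hε_comp]
      exact (htpos k).le
    · rw [hε_zero m h]
  have hts : Summable t :=
    Summable.of_nonneg_of_le (fun k => (htpos k).le) htle
      (summable_geometric_of_lt_one (by norm_num) (by norm_num))
  have hεsum : Summable ε := by
    refine (hninj.summable_iff hε_zero).mp ?_
    refine hts.congr ?_
    intro k
    exact (hε_comp k).symm
  refine ⟨ε, hεnonneg, hεsum, ?_⟩
  intro G hG M
  obtain ⟨K, hK⟩ := exists_nat_gt M
  refine ⟨nn K, ?_⟩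
  -- transfer HasSum along nn
  have htrans : ∀ y : Y, HasSum (fun m => ε m • g m y) (G y) →
      HasSum (fun k => t k • g (nn k) y) (G y) := by
    intro y hy
    have h0 : ∀ x ∉ Set.range nn, ε x • g x y = 0 := by
      intro x hx
      rw [hε_zero x hx, zero_smul]
    have := (hninj.hasSum_iff h0).mpr hy
    refine this.congr_fun ?_
    intro k
    simp only [Function.comp_apply, hε_comp]
  have h1 := htrans _ (hG (y₁ (nn K)) ⟨nn K, Or.inl rfl⟩)
  have h2 := htrans _ (hG (y₂ (nn K)) ⟨nn K, Or.inr rfl⟩)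
  have hdiff : HasSum (fun k => t k • (g (nn k) (y₁ (nn K)) - g (nn k) (y₂ (nn K))))
      (G (y₁ (nn K)) - G (y₂ (nn K))) := by
    simpa [smul_sub] using h1.sub h2
  set D : ℕ → F := fun k => t k • (g (nn k) (y₁ (nn K)) - g (nn k) (y₂ (nn K))) with hD
  set T : F := G (y₁ (nn K)) - G (y₂ (nn K)) with hT
  have hTsum : T = D K + ∑' k, (if k = K then 0 else D k) := by
    rw [← hdiff.tsum_eq]
    exact Summable.tsum_eq_add_tsum_ite hdiff.summable K
  -- bound the remainder
  set u : ℕ → ℝ := fun k => if k = K then 0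
    else t k * ‖g (nn k) (y₁ (nn K)) - g (nn k) (y₂ (nn K))‖ with hu
  have hu_nonneg : ∀ k, 0 ≤ u k := by
    intro k
    rw [hu]
    dsimp only
    split_ifs
    · exact le_rfl
    · exact mul_nonneg (htpos k).le (norm_nonneg _)
  have hu_le : ∀ k, u k ≤ Cc * t k := by
    intro k
    rw [hu]
    dsimp only
    split_ifs
    · exact mul_nonneg hCc0 (htpos k).le
    · calc t k * ‖g (nn k) (y₁ (nn K)) - g (nn k) (y₂ (nn K))‖
          ≤ t k * Cc := mul_le_mul_of_nonneg_left (hCc _ _) (htpos k).le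
        _ = Cc * t k := mul_comm _ _
  have husum : Summable u :=
    Summable.of_nonneg_of_le hu_nonneg hu_le (hts.mul_left Cc)
  have hR : ‖∑' k, (if k = K then 0 else D k)‖ ≤ ∑' k, u k := by
    refine tsum_of_norm_bounded husum.hasSum ?_
    intro k
    rw [hD, hu]
    dsimp only
    split_ifs
    · simp
    · rw [norm_smul, Real.norm_of_nonneg (htpos k).le]
  have hcK := hc (nn K)
  have hfin : ∑ k ∈ Finset.range (K + 1), u k ≤ SS K * c (nn K) := by
    rw [Finset.sum_range_succ]
    have huK : u K = 0 := by simp [hu]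
    rw [huK, add_zero, hSSf K, Finset.sum_mul]
    refine Finset.sum_le_sum ?_
    intro j hj
    have hjK : j ≠ K := Nat.ne_of_lt (Finset.mem_range.mp hj)
    have huj : u j = t j * ‖g (nn j) (y₁ (nn K)) - g (nn j) (y₂ (nn K))‖ := by
      simp [hu, hjK]
    rw [huj, mul_assoc]
    exact mul_le_mul_of_nonneg_left ((div_le_iff₀ hcK).mp (hLa (nn j) (nn K))) (htpos j).le
  have hsummable_shift : Summable (fun k => u (k + (K + 1))) :=
    (summable_nat_add_iff (K + 1)).mpr husum
  have hsummable_geo : Summable (fun k : ℕ => (1 / 2 : ℝ) ^ (k + (K + 1)) * c (nn K)) := by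
    refine Summable.mul_right _ ?_
    exact (summable_nat_add_iff (K + 1)).mpr
      (summable_geometric_of_lt_one (by norm_num) (by norm_num))
  have hbound : ∀ k : ℕ, u (k + (K + 1)) ≤ (1 / 2 : ℝ) ^ (k + (K + 1)) * c (nn K) := by
    intro k
    have hne : k + (K + 1) ≠ K := by omega
    have huj : u (k + (K + 1)) =
        t (k + (K + 1)) * ‖g (nn (k + (K + 1))) (y₁ (nn K)) - g (nn (k + (K + 1))) (y₂ (nn K))‖ := by
      simp [hu, hne]
    rw [huj]
    calc t (k + (K + 1)) * ‖g (nn (k + (K + 1))) (y₁ (nn K)) - g (nn (k + (K + 1))) (y₂ (nn K))‖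
        ≤ t (k + (K + 1)) * Cc :=
          mul_le_mul_of_nonneg_left (hCc _ _) (htpos _).le
      _ ≤ t (k + (K + 1)) * (Cc + 1) :=
          mul_le_mul_of_nonneg_left (by linarith) (htpos _).le
      _ ≤ (1 / 2 : ℝ) ^ (k + (K + 1)) * c (nn K) := ht_le K (k + (K + 1)) (by omega)
  have hgeo : ∑' k : ℕ, (1 / 2 : ℝ) ^ (k + (K + 1)) * c (nn K) =
      (1 / 2 : ℝ) ^ K * c (nn K) := by
    have hcongr : ∀ k : ℕ, (1 / 2 : ℝ) ^ (k + (K + 1)) * c (nn K) =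
        (1 / 2 : ℝ) ^ k * ((1 / 2 : ℝ) ^ (K + 1) * c (nn K)) := by
      intro k
      rw [pow_add]
      ring
    rw [tsum_congr hcongr, tsum_mul_right,
      tsum_geometric_of_lt_one (by norm_num) (by norm_num), pow_succ]
    norm_num
    ring
  have htail : ∑' k : ℕ, u (k + (K + 1)) ≤ c (nn K) := by
    calc ∑' k : ℕ, u (k + (K + 1))
        ≤ ∑' k : ℕ, (1 / 2 : ℝ) ^ (k + (K + 1)) * c (nn K) :=
          Summable.tsum_le_tsum hbound hsummable_shift hsummable_geo
      _ = (1 / 2 : ℝ) ^ K * c (nn K) := hgeo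
      _ ≤ 1 * c (nn K) := by
          exact mul_le_mul_of_nonneg_right (pow_le_one₀ (by norm_num) (by norm_num)) hcK.le
      _ = c (nn K) := one_mul _
  have hu_total : ∑' k, u k ≤ (SS K + 1) * c (nn K) := by
    have hsplit := Summable.sum_add_tsum_nat_add (K + 1) husum
    have hmul : (SS K + 1) * c (nn K) = SS K * c (nn K) + c (nn K) := by ring
    rw [← hsplit, hmul]
    exact add_le_add hfin htail
  have hDK : ((K : ℝ) + 1 + SS K) * c (nn K) < ‖D K‖ := by
    have h := hkey K
    rw [div_lt_div_iff₀ (htpos K) (hc (nn K))] at h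
    rw [hD]
    dsimp only
    rw [norm_smul, Real.norm_of_nonneg (htpos K).le]
    nlinarith [h]
  have hTnorm : (K : ℝ) * c (nn K) < ‖T‖ := by
    have hDeq : D K = T - ∑' k, (if k = K then 0 else D k) := by
      rw [hTsum]
      abel
    have h1' : ‖D K‖ ≤ ‖T‖ + ‖∑' k, (if k = K then 0 else D k)‖ := by
      rw [hDeq]
      exact norm_sub_le _ _
    have e1 : ((K : ℝ) + 1 + SS K) * c (nn K) =
        (K : ℝ) * c (nn K) + c (nn K) + SS K * c (nn K) := by ring
    have e2 : (SS K + 1) * c (nn K) = SS K * c (nn K) + c (nn K) := by ring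
    nlinarith [hDK, hR, hu_total, h1']
  exact hK.trans ((lt_div_iff₀ hcK).mpr hTnorm)
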